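/- arXiv:2407.19748 — 2 statements merged into one kernel-verified Lean document; each statement's English description precedes it below -/
import Mathlib

section
/- For every E ∈ H_0(curl,Ω), the commuting property Π̃_k^{0,RT}(curl E) = curl(Π_k^N E) holds. -/
/-!
STATEMENT 9 (commuting property Π̃_k^{0,RT}(curl E) = curl(Π_k^N E)).
`V` models L²(Ω)³, `W` models L²(Ω), `Z` the codomain of the divergence;
`curl`, `grad`, `dvg` are abstract linear operators; `Hcurl0` models
H₀(curl,Ω).  `Vhc`, `Vhd`, `Wh` are the Nédélec, Raviart–Thomas and Lagrange
spaces with zero traces; the discrete exact sequence is encoded by `hseq1`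
(gradients of discrete scalars are discrete Nédélec fields), `hseq2` (curls of
discrete Nédélec fields are divergence-free Raviart–Thomas fields) and `hseq3`
(every divergence-free Raviart–Thomas field is such a curl).  `PiN` is the
elliptic projection onto `Vhc`, `proj` the L² projection onto the
divergence-free Raviart–Thomas subspace.
-/

open RealInnerProductSpace

theorem stmt9
    {V W Z : Type*} [NormedAddCommGroup V] [InnerProductSpace ℝ V]
    [NormedAddCommGroup W] [InnerProductSpace ℝ W]
    [AddCommGroup Z] [Module ℝ Z]
    (curl : V →ₗ[ℝ] V) (grad : W →ₗ[ℝ] V) (dvg : V →ₗ[ℝ] Z)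
    (Hcurl0 : Set V)
    (Vhc Vhd : Submodule ℝ V) (Wh : Submodule ℝ W)
    (hseq1 : ∀ Q ∈ Wh, grad Q ∈ Vhc)
    (hseq2 : ∀ Fh ∈ Vhc, curl Fh ∈ Vhd ∧ dvg (curl Fh) = 0)
    (hseq3 : ∀ Ch ∈ Vhd, dvg Ch = 0 → ∃ Fh ∈ Vhc, curl Fh = Ch)
    (PiN : V → V)
    (hPiN : ∀ E ∈ Hcurl0, PiN E ∈ Vhc ∧
      (∀ Fh ∈ Vhc, ⟪curl (E - PiN E), curl Fh⟫ = 0) ∧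
      (∀ Qh ∈ Wh, ⟪E - PiN E, grad Qh⟫ = 0))
    (proj : V → V)
    (hproj : ∀ B : V, (proj B ∈ Vhd ∧ dvg (proj B) = 0) ∧
      ∀ Ch ∈ Vhd, dvg Ch = 0 → ⟪B - proj B, Ch⟫ = 0) :
    ∀ E ∈ Hcurl0, proj (curl E) = curl (PiN E) := by
  intro E hE
  obtain ⟨hPiNmem, hPiNcurl, -⟩ := hPiN E hE
  obtain ⟨⟨hpm, hpd⟩, hport⟩ := hproj (curl E)
  obtain ⟨hcm, hcd⟩ := hseq2 (PiN E) hPiNmem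
  -- d := proj (curl E) - curl (PiN E)
  set d : V := proj (curl E) - curl (PiN E) with hd
  have hdm : d ∈ Vhd := Vhd.sub_mem hpm hcm
  have hdd : dvg d = 0 := by
    simp [hd, map_sub, hpd, hcd]
  have h1 : ⟪curl E - proj (curl E), d⟫ = 0 := hport d hdm hdd
  have h2 : ⟪curl E - curl (PiN E), d⟫ = 0 := by
    obtain ⟨Fh, hFh, hFheq⟩ := hseq3 d hdm hdd
    have := hPiNcurl Fh hFh
    rw [map_sub] at this
    rw [hFheq] at this
    exact this
  have h3 : ⟪d, d⟫ = 0 := by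
    have : ⟪curl E - curl (PiN E), d⟫ - ⟪curl E - proj (curl E), d⟫ = ⟪d, d⟫ := by
      rw [← inner_sub_left]
      congr 1
      rw [hd]; abel
    rw [h1, h2] at this
    simpa using this.symm
  have : d = 0 := inner_self_eq_zero.mp h3
  have := sub_eq_zero.mp this
  exact this
end

section
/- Let (u_h, ω_h, j_h, E_h, H_h, B_h, P_h) solve the semi-discrete seven-field scheme with initial magnetic data B_h⁰ = Π̃_k^{0,RT} B⁰. Then ∂_t B_h = −curl E_h holds strongly, and div B_h(·,t) = 0 for all t ∈ [0,T]. -/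
/-!
STATEMENT 12 (strong form of Faraday's law and preservation of the magnetic
Gauss law for the semi-discrete scheme).  Setting as in the semi-discrete
seven-field scheme: `V` models L²(Ω)³, `W` models L²(Ω), `Z` the codomain of
the divergence `dvg`.  The discrete exact sequence gives
curl (Vhc) ⊆ Vhd (`hseq`) and dvg ∘ curl = 0 (`hdivcurl`).  The initial datum
is B_h(0) = Π̃_k^{0,RT} B⁰, the L² projection (`hproj`) of a divergence-free
B⁰ onto the divergence-free Raviart–Thomas space.
-/

open RealInnerProductSpace Topology

section Stmt12Aux

variable {V : Type*} [NormedAddCommGroup V] [InnerProductSpace ℝ V]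

/-- If `x` lies in the topological closure of a submodule and is orthogonal to every
element of the submodule, then `x = 0`. -/
lemma stmt12_orth_closure (S : Submodule ℝ V) {x : V}
    (hx : x ∈ S.topologicalClosure) (h : ∀ y ∈ S, ⟪x, y⟫ = 0) : x = 0 := by
  have hx' : x ∈ closure (S : Set V) := by
    rwa [← Submodule.topologicalClosure_coe]
  have hc : IsClosed {y : V | ⟪x, y⟫ = 0} :=
    isClosed_eq (Continuous.inner continuous_const continuous_id) continuous_const
  have hsub : (S : Set V) ⊆ {y : V | ⟪x, y⟫ = 0} := fun y hy => h y hy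
  have : x ∈ {y : V | ⟪x, y⟫ = 0} := closure_minimal hsub hc hx'
  exact inner_self_eq_zero.mp this

/-- The quotient map onto `V ⧸ S.topologicalClosure` as a continuous linear map. -/
noncomputable def stmt12_mkQc (S : Submodule ℝ V) :
    V →L[ℝ] V ⧸ S.topologicalClosure :=
  LinearMap.mkContinuous S.topologicalClosure.mkQ 1 fun m => by
    simpa [Submodule.mkQ_apply, one_mul] using
      Submodule.Quotient.norm_mk_le S.topologicalClosure m

lemma stmt12_mkQc_eq_zero (S : Submodule ℝ V) {x : V} (hx : x ∈ S.topologicalClosure) :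
    stmt12_mkQc S x = 0 := by
  show S.topologicalClosure.mkQ x = 0
  simpa [Submodule.mkQ_apply] using (Submodule.Quotient.mk_eq_zero _).mpr hx

lemma stmt12_mem_of_mkQc_eq_zero (S : Submodule ℝ V) {x : V}
    (hx : stmt12_mkQc S x = 0) : x ∈ S.topologicalClosure := by
  have : S.topologicalClosure.mkQ x = 0 := hx
  rw [Submodule.mkQ_apply] at this
  exact (Submodule.Quotient.mk_eq_zero _).mp this

end Stmt12Aux

theorem stmt12
    {V W Z : Type*} [NormedAddCommGroup V] [InnerProductSpace ℝ V]
    [NormedAddCommGroup W] [InnerProductSpace ℝ W]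
    [AddCommGroup Z] [Module ℝ Z]
    (curl : V →ₗ[ℝ] V) (grad : W →ₗ[ℝ] V) (dvg : V →ₗ[ℝ] Z) (cross : V → V → V)
    (Vhc Vhd : Submodule ℝ V) (Wh : Submodule ℝ W)
    (hseq : ∀ vh ∈ Vhc, curl vh ∈ Vhd)
    (hdivcurl : ∀ v : V, dvg (curl v) = 0)
    (proj : V → V)
    (hproj : ∀ Bv : V, (proj Bv ∈ Vhd ∧ dvg (proj Bv) = 0) ∧
      ∀ Ch ∈ Vhd, dvg Ch = 0 → ⟪Bv - proj Bv, Ch⟫ = 0)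
    (T Re Rm sc μ : ℝ) (hT : 0 < T) (hRe : 0 < Re) (hRm : 0 < Rm)
    (hsc : 0 < sc) (hμ : 0 < μ)
    (f : ℝ → V)
    (u ω j E H B : ℝ → V) (P : ℝ → W) (u' B' : ℝ → V)
    (hu' : ∀ t ∈ Set.Ioc (0:ℝ) T, HasDerivAt u (u' t) t)
    (hB' : ∀ t ∈ Set.Ioc (0:ℝ) T, HasDerivAt B (B' t) t)
    (hBcont : ContinuousOn B (Set.Icc (0:ℝ) T))
    (hmem : ∀ t ∈ Set.Ioc (0:ℝ) T,
      u t ∈ Vhc ∧ ω t ∈ Vhc ∧ j t ∈ Vhc ∧ E t ∈ Vhc ∧ H t ∈ Vhc ∧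
      B t ∈ Vhd ∧ P t ∈ Wh)
    (heq1 : ∀ t ∈ Set.Ioc (0:ℝ) T, ∀ v ∈ Vhc,
      ⟪u' t, v⟫ - ⟪cross (u t) (ω t), v⟫ + Re⁻¹ * ⟪curl (u t), curl v⟫
        - sc * ⟪cross (j t) (μ • H t), v⟫ + ⟪grad (P t), v⟫ = ⟪f t, v⟫)
    (heq2 : ∀ t ∈ Set.Ioc (0:ℝ) T, ∀ kh ∈ Vhc,
      μ * ⟪j t, kh⟫ - ⟪B t, curl kh⟫ = 0)
    (heq3 : ∀ t ∈ Set.Ioc (0:ℝ) T, ∀ Ch ∈ Vhd,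
      ⟪B' t, Ch⟫ + ⟪curl (E t), Ch⟫ = 0)
    (heq4 : ∀ t ∈ Set.Ioc (0:ℝ) T, ∀ Gh ∈ Vhc,
      ⟪Rm⁻¹ • j t - (E t + cross (u t) (μ • H t)), Gh⟫ = 0)
    (heq5 : ∀ t ∈ Set.Ioc (0:ℝ) T, ∀ Qh' ∈ Wh, ⟪u t, grad Qh'⟫ = 0)
    (heq6 : ∀ t ∈ Set.Ioc (0:ℝ) T, ∀ mh ∈ Vhc,
      ⟪ω t, mh⟫ - ⟪u t, curl mh⟫ = 0)
    (heq7 : ∀ t ∈ Set.Ioc (0:ℝ) T, ∀ Fh ∈ Vhc,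
      ⟪B t, Fh⟫ - μ * ⟪H t, Fh⟫ = 0)
    -- initial magnetic datum: B_h(0) = Π̃_k^{0,RT} B⁰ with div B⁰ = 0
    (B0 : V) (hB0 : dvg B0 = 0) (hBinit : B 0 = proj B0) :
    (∀ t ∈ Set.Ioc (0:ℝ) T, B' t = -(curl (E t))) ∧
    (∀ t ∈ Set.Icc (0:ℝ) T, dvg (B t) = 0) := by
  classical
  haveI hVhdC : IsClosed ((Vhd.topologicalClosure : Submodule ℝ V) : Set V) :=
    Submodule.isClosed_topologicalClosure Vhd
  -- Part 1: strong Faraday law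
  have part1 : ∀ t ∈ Set.Ioc (0:ℝ) T, B' t = -(curl (E t)) := by
    intro t ht
    set q := stmt12_mkQc Vhd with hq
    have hd1 : HasDerivWithinAt (fun s => q (B s)) (q (B' t)) (Set.Ioc (0:ℝ) T) t :=
      q.hasFDerivAt.comp_hasDerivWithinAt t ((hB' t ht).hasDerivWithinAt)
    have hd0 : HasDerivWithinAt (fun s => q (B s)) 0 (Set.Ioc (0:ℝ) T) t := by
      have hz : HasDerivWithinAt (fun _ : ℝ => (0 : V ⧸ Vhd.topologicalClosure)) 0
          (Set.Ioc (0:ℝ) T) t := hasDerivWithinAt_const _ _ _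
      exact hz.congr
        (fun y hy => stmt12_mkQc_eq_zero Vhd
          (Submodule.le_topologicalClosure Vhd (hmem y hy).2.2.2.2.2.1))
        (stmt12_mkQc_eq_zero Vhd
          (Submodule.le_topologicalClosure Vhd (hmem t ht).2.2.2.2.2.1))
    have huniq : q (B' t) = 0 :=
      UniqueDiffWithinAt.eq_deriv (Set.Ioc (0:ℝ) T) (uniqueDiffOn_Ioc 0 T t ht) hd1 hd0
    have hBmem : B' t ∈ Vhd.topologicalClosure := stmt12_mem_of_mkQc_eq_zero Vhd huniq
    have hx : B' t + curl (E t) ∈ Vhd.topologicalClosure :=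
      Submodule.add_mem _ hBmem
        (Submodule.le_topologicalClosure Vhd (hseq _ (hmem t ht).2.2.2.1))
    have horth : ∀ Ch ∈ Vhd, ⟪B' t + curl (E t), Ch⟫ = 0 := by
      intro Ch hCh
      have h3 := heq3 t ht Ch hCh
      rw [inner_add_left]
      linarith
    have hx0 : B' t + curl (E t) = 0 := stmt12_orth_closure Vhd hx horth
    exact eq_neg_of_add_eq_zero_left hx0
  refine ⟨part1, ?_⟩
  -- the divergence-free Raviart–Thomas subspace
  set K : Submodule ℝ V := Vhd ⊓ LinearMap.ker dvg with hKdef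
  haveI hKC : IsClosed ((K.topologicalClosure : Submodule ℝ V) : Set V) :=
    Submodule.isClosed_topologicalClosure K
  set p := stmt12_mkQc K with hp
  have hB0mem : B 0 ∈ K := by
    rw [hBinit]
    exact ⟨(hproj B0).1.1, (hproj B0).1.2⟩
  -- the derivative of p ∘ B vanishes on (0, T]
  have hpderiv : ∀ s ∈ Set.Ioc (0:ℝ) T, HasDerivAt (fun r => p (B r)) 0 s := by
    intro s hs
    have hd : HasDerivAt (fun r => p (B r)) (p (B' s)) s :=
      p.hasFDerivAt.comp_hasDerivAt s (hB' s hs)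
    have hmemK : B' s ∈ K := by
      rw [part1 s hs]
      exact Submodule.neg_mem _ ⟨hseq _ (hmem s hs).2.2.2.1, hdivcurl (E s)⟩
    have : p (B' s) = 0 :=
      stmt12_mkQc_eq_zero K (Submodule.le_topologicalClosure K hmemK)
    rwa [this] at hd
  -- p ∘ B is continuous on [0, T]
  have hpcont : ContinuousOn (fun r => p (B r)) (Set.Icc (0:ℝ) T) :=
    p.continuous.comp_continuousOn hBcont
  -- hence p ∘ B vanishes identically on [0, T]
  have hBclos : ∀ t ∈ Set.Icc (0:ℝ) T, B t ∈ K.topologicalClosure := by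
    intro t htIcc
    rcases eq_or_lt_of_le htIcc.1 with h0 | h0
    · exact Submodule.le_topologicalClosure K (by rwa [← h0])
    have ht : t ∈ Set.Ioc (0:ℝ) T := ⟨h0, htIcc.2⟩
    -- on every [s, t] with 0 < s ≤ t the function p ∘ B is constant
    have hconst : ∀ s ∈ Set.Ioc (0:ℝ) t, p (B s) = p (B t) := by
      intro s hs
      have hsub : Set.Icc s t ⊆ Set.Icc (0:ℝ) T :=
        Set.Icc_subset_Icc (le_of_lt hs.1) ht.2
      have := constant_of_has_deriv_right_zero (f := fun r => p (B r)) (a := s) (b := t)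
        (hpcont.mono hsub)
        (fun x hx => (hpderiv x ⟨lt_of_lt_of_le hs.1 hx.1,
          le_trans (le_of_lt hx.2) ht.2⟩).hasDerivWithinAt)
      exact (this t (Set.right_mem_Icc.mpr hs.2)).symm
    -- let s → 0⁺ and use continuity at 0
    have hne : (𝓝[Set.Ioc (0:ℝ) t] (0:ℝ)).NeBot := by
      rw [← mem_closure_iff_nhdsWithin_neBot, closure_Ioc (ne_of_lt h0)]
      exact Set.left_mem_Icc.mpr (le_of_lt h0)
    have htend0 : Filter.Tendsto (fun r => p (B r)) (𝓝[Set.Ioc (0:ℝ) t] (0:ℝ))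
        (𝓝 (p (B 0))) := by
      have h0Icc : (0:ℝ) ∈ Set.Icc (0:ℝ) T := Set.left_mem_Icc.mpr (le_of_lt hT)
      exact ((hpcont 0 h0Icc).mono
        (Set.Ioc_subset_Icc_self.trans (Set.Icc_subset_Icc le_rfl ht.2)))
    have htendc : Filter.Tendsto (fun r => p (B r)) (𝓝[Set.Ioc (0:ℝ) t] (0:ℝ))
        (𝓝 (p (B t))) := by
      refine Filter.Tendsto.congr' ?_ tendsto_const_nhds
      filter_upwards [self_mem_nhdsWithin] with s hs
      exact (hconst s hs).symm
    have : p (B 0) = p (B t) := tendsto_nhds_unique htend0 htendc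
    have hpt0 : p (B t) = 0 := by
      rw [← this]
      exact stmt12_mkQc_eq_zero K (Submodule.le_topologicalClosure K hB0mem)
    exact stmt12_mem_of_mkQc_eq_zero K hpt0
  -- conclude: B t equals its projection, hence is divergence free
  intro t htIcc
  have hKt := hproj (B t)
  have hd : B t - proj (B t) = 0 := by
    refine stmt12_orth_closure K ?_ ?_
    · exact Submodule.sub_mem _ (hBclos t htIcc)
        (Submodule.le_topologicalClosure K ⟨hKt.1.1, hKt.1.2⟩)
    · intro y hy
      exact hKt.2 y hy.1 hy.2
  have : B t = proj (B t) := by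
    have := sub_eq_zero.mp hd
    exact this
  rw [this]
  exact hKt.1.2
end
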